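/- arXiv:1708.01910 — 7 statements merged into one kernel-verified Lean document; each statement's English description precedes it below -/
import Mathlib

section
/- Let a_{21} > a_{11} > a_{22} > a_{12} be real numbers, set b_{ij} = a_{ji} (a prisoner's dilemma), and let the empathy matrix have λ_{11} = λ_{22} = 1. If min(λ_{12}, λ_{21}) > (a_{21} − a_{11})/(a_{11} − a_{12}), then in the empathetic game action 1 is no longer dominated by action 2 for either player; precisely, a^Λ_{11} > a^Λ_{21} and b^Λ_{11} > b^Λ_{12}. Hence a strategy dominated in G_I need not be dominated in G_Λ for Λ ≠ I. -/
/-- In a prisoner's dilemma (a21 > a11 > a22 > a12, b_ij = a_ji) with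
empathy matrix having λ11 = λ22 = 1, if min(λ12, λ21) > (a21 − a11)/(a11 − a12),
then in the empathetic game action 1 is no longer dominated by action 2 for either
player: a^Λ_11 > a^Λ_21 and b^Λ_11 > b^Λ_12. -/
theorem stmt0 (a11 a12 a21 a22 b11 b12 b21 b22 l11 l12 l21 l22 : ℝ)
    (hpd1 : a21 > a11) (hpd2 : a11 > a22) (hpd3 : a22 > a12)
    (hb11 : b11 = a11) (hb12 : b12 = a21) (hb21 : b21 = a12) (hb22 : b22 = a22)
    (hl11 : l11 = 1) (hl22 : l22 = 1)
    (hl : min l12 l21 > (a21 - a11) / (a11 - a12)) :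
    (l11 * a11 + l12 * b11 > l11 * a21 + l12 * b21) ∧
    (l22 * b11 + l21 * a11 > l22 * b12 + l21 * a12) := by
  have hd : (0:ℝ) < a11 - a12 := by linarith
  have h12 : l12 * (a11 - a12) > a21 - a11 := by
    have h : l12 > (a21 - a11) / (a11 - a12) := lt_of_lt_of_le hl (min_le_left _ _)
    calc a21 - a11 = (a21 - a11) / (a11 - a12) * (a11 - a12) := by field_simp
    _ < l12 * (a11 - a12) := by apply mul_lt_mul_of_pos_right h hd
  have h21 : l21 * (a11 - a12) > a21 - a11 := by
    have h : l21 > (a21 - a11) / (a11 - a12) := lt_of_lt_of_le hl (min_le_right _ _)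
    calc a21 - a11 = (a21 - a11) / (a11 - a12) * (a11 - a12) := by field_simp
    _ < l21 * (a11 - a12) := by apply mul_lt_mul_of_pos_right h hd
  subst hb11 hb12 hb21 hb22 hl11 hl22
  constructor <;> nlinarith
end

section
/- Let a_{21} > a_{11} > a_{22} > a_{12} be real numbers, set b_{ij} = a_{ji} (a symmetric prisoner's dilemma), and let λ_{11} = λ_{22} = 1. If min(λ_{12}, λ_{21}) > (a_{21} − a_{11})/(a_{11} − a_{12}), then the action profile (1,1) is a strict pure Nash equilibrium of the empathetic game G_Λ; that is, the empathetic version of the game selects the social-welfare profile (1,1). -/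
/-- In a symmetric prisoner's dilemma with λ11 = λ22 = 1 and
min(λ12, λ21) > (a21 − a11)/(a11 − a12), the profile (1,1) is a strict pure
Nash equilibrium of the empathetic game G_Λ: the row player strictly prefers
action 1 against action 1 (a^Λ_11 > a^Λ_21) and the column player strictly
prefers action 1 against action 1 (b^Λ_11 > b^Λ_12). -/
theorem stmt2 (a11 a12 a21 a22 b11 b12 b21 b22 l11 l12 l21 l22 : ℝ)
    (hpd1 : a21 > a11) (hpd2 : a11 > a22) (hpd3 : a22 > a12)
    (hb11 : b11 = a11) (hb12 : b12 = a21) (hb21 : b21 = a12) (hb22 : b22 = a22)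
    (hl11 : l11 = 1) (hl22 : l22 = 1)
    (hl : min l12 l21 > (a21 - a11) / (a11 - a12)) :
    (l11 * a11 + l12 * b11 > l11 * a21 + l12 * b21) ∧
    (l22 * b11 + l21 * a11 > l22 * b12 + l21 * a12) := by
  rw [hb11, hb12, hb21, hl11, hl22]
  have hd : (0:ℝ) < a11 - a12 := by linarith
  have h12 : l12 > (a21 - a11) / (a11 - a12) := lt_of_lt_of_le hl (min_le_left _ _)
  have h21 : l21 > (a21 - a11) / (a11 - a12) := lt_of_lt_of_le hl (min_le_right _ _)
  have h12' : l12 * (a11 - a12) > a21 - a11 := by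
    have := (div_lt_iff₀ hd).mp h12; linarith
  have h21' : l21 * (a11 - a12) > a21 - a11 := by
    have := (div_lt_iff₀ hd).mp h21; linarith
  constructor <;> nlinarith
end

section
/- Let A be a real 2×2 matrix with β_1 = a_{11} − a_{21}, β_2 = a_{22} − a_{12} and β_1 β_2 ≠ 0, let c_1 ≠ c_2 and V be reals, and suppose the constraint set C = {y ∈ [0,1] : c_1 y + c_2 (1−y) ≤ V} is nonempty. Then the constrained single-population game admits at least one constrained evolutionarily stable strategy m* ∈ C. -/
def uA (a11 a12 a21 a22 x m : ℝ) : ℝ :=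
  x * m * a11 + x * (1 - m) * a12 + (1 - x) * m * a21 + (1 - x) * (1 - m) * a22

def IsCESS (a11 a12 a21 a22 : ℝ) (C : Set ℝ) (m' : ℝ) : Prop :=
  m' ∈ C ∧ ∀ m ∈ C, m ≠ m' → ∃ εb ∈ Set.Ioc (0:ℝ) 1, ∀ ε ∈ Set.Ioo (0:ℝ) εb,
    uA a11 a12 a21 a22 m' (ε * m + (1 - ε) * m') >
      uA a11 a12 a21 a22 m (ε * m + (1 - ε) * m')

lemma uA_diff (a11 a12 a21 a22 x y p : ℝ) :
    uA a11 a12 a21 a22 x p - uA a11 a12 a21 a22 y p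
      = (x - y) * (p * ((a11 - a21) + (a22 - a12)) - (a22 - a12)) := by
  unfold uA; ring

lemma key (a11 a12 a21 a22 l r : ℝ)
    (hβ : (a11 - a21) * (a22 - a12) ≠ 0) (hlr : l ≤ r) :
    ∃ m', IsCESS a11 a12 a21 a22 (Set.Icc l r) m' := by
  set β2 : ℝ := a22 - a12 with hβ2def
  set s : ℝ := (a11 - a21) + β2 with hsdef
  have hβ2 : β2 ≠ 0 := fun h => hβ (by rw [h, mul_zero])
  have main : ∀ m' m ε : ℝ, 0 < (m' - m) * ((ε * m + (1 - ε) * m') * s - β2) →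
      uA a11 a12 a21 a22 m' (ε * m + (1 - ε) * m') >
        uA a11 a12 a21 a22 m (ε * m + (1 - ε) * m') := by
    intro m' m ε h
    have := uA_diff a11 a12 a21 a22 m' m (ε * m + (1 - ε) * m')
    rw [gt_iff_lt, ← sub_pos, this]
    exact h
  rcases lt_or_ge 0 (r * s - β2) with hfr | hfr
  · -- f r > 0 : m' = r
    refine ⟨r, ⟨hlr, le_refl r⟩, ?_⟩
    intro m hm hmr
    have hmltr : m < r := lt_of_le_of_ne hm.2 hmr
    set X : ℝ := (m - r) * s with hX
    refine ⟨min 1 ((r * s - β2) / (|X| + 1)), ⟨?_, min_le_left _ _⟩, ?_⟩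
    · exact lt_min one_pos (div_pos hfr (by positivity))
    · intro ε hε
      apply main
      have h1 : ε < (r * s - β2) / (|X| + 1) := lt_of_lt_of_le hε.2 (min_le_right _ _)
      have h2 : ε * (|X| + 1) < r * s - β2 := by
        rw [← lt_div_iff₀ (by positivity)]; exact h1
      have h4 : ε * (-|X|) ≤ ε * X := mul_le_mul_of_nonneg_left (neg_abs_le X) hε.1.le
      have heq : (ε * m + (1 - ε) * r) * s - β2 = (r * s - β2) + ε * X := by
        rw [hX]; ring
      have hinner : 0 < (ε * m + (1 - ε) * r) * s - β2 := by
        rw [heq]; nlinarith [hε.1]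
      exact mul_pos (by linarith) hinner
  · rcases lt_or_ge (l * s - β2) 0 with hfl | hfl
    · -- f l < 0 : m' = l
      refine ⟨l, ⟨le_refl l, hlr⟩, ?_⟩
      intro m hm hml
      have hlm : l < m := lt_of_le_of_ne hm.1 (Ne.symm hml)
      set X : ℝ := (m - l) * s with hX
      refine ⟨min 1 ((β2 - l * s) / (|X| + 1)), ⟨?_, min_le_left _ _⟩, ?_⟩
      · exact lt_min one_pos (div_pos (by linarith) (by positivity))
      · intro ε hε
        apply main
        have h1 : ε < (β2 - l * s) / (|X| + 1) := lt_of_lt_of_le hε.2 (min_le_right _ _)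
        have h2 : ε * (|X| + 1) < β2 - l * s := by
          rw [← lt_div_iff₀ (by positivity)]; exact h1
        have h4 : ε * X ≤ ε * |X| := mul_le_mul_of_nonneg_left (le_abs_self X) hε.1.le
        have heq : (ε * m + (1 - ε) * l) * s - β2 = (l * s - β2) + ε * X := by
          rw [hX]; ring
        have hinner : (ε * m + (1 - ε) * l) * s - β2 < 0 := by
          rw [heq]; nlinarith [hε.1]
        exact mul_pos_of_neg_of_neg (by linarith) hinner
    · -- f l ≥ 0 ≥ f r
      rcases eq_or_lt_of_le hlr with heq | hlltr
      · -- singleton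
        refine ⟨l, ⟨le_refl l, hlr⟩, ?_⟩
        intro m hm hml
        exact absurd (le_antisymm (heq ▸ hm.2) hm.1) hml
      · have hs : s < 0 := by
          rcases lt_or_ge s 0 with h | h
          · exact h
          · exfalso
            have h1 : l * s ≤ r * s := mul_le_mul_of_nonneg_right hlltr.le h
            have h2 : s * (r - l) = 0 := by nlinarith
            rcases mul_eq_zero.mp h2 with h3 | h3
            · have : β2 = r * s := by linarith
              rw [h3, mul_zero] at this
              exact hβ2 this
            · linarith
        refine ⟨β2 / s, ⟨?_, ?_⟩, ?_⟩
        · rw [le_div_iff_of_neg hs]; nlinarith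
        · rw [div_le_iff_of_neg hs]; nlinarith
        · intro m hm hmne
          refine ⟨1, ⟨one_pos, le_refl 1⟩, ?_⟩
          intro ε hε
          apply main
          have hms : β2 / s * s = β2 := div_mul_cancel₀ β2 (ne_of_lt hs)
          have hne : m - β2 / s ≠ 0 := sub_ne_zero.mpr hmne
          have hsq : 0 < (m - β2 / s) ^ 2 := by positivity
          have hint : 0 < ε * (-s) * (m - β2 / s) ^ 2 :=
            mul_pos (mul_pos hε.1 (neg_pos.mpr hs)) hsq
          have key2 : ∀ t : ℝ, t * s = β2 → (t - m) * ((ε * m + (1 - ε) * t) * s - β2)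
              = ε * (-s) * (m - t) ^ 2 := by
            intro t ht
            linear_combination (t - m) * ht
          have heq2 := key2 (β2 / s) hms
          rw [heq2]
          exact hint

/-- If β1 β2 ≠ 0, c1 ≠ c2 and the constraint set
C = {y ∈ [0,1] : c1 y + c2 (1−y) ≤ V} is nonempty, then the constrained
single-population game has at least one constrained ESS. -/
theorem stmt6 (a11 a12 a21 a22 c1 c2 V : ℝ)
    (hβ : (a11 - a21) * (a22 - a12) ≠ 0) (hc : c1 ≠ c2)
    (hC : ({y ∈ Set.Icc (0:ℝ) 1 | c1 * y + c2 * (1 - y) ≤ V}).Nonempty) :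
    ∃ m', IsCESS a11 a12 a21 a22
      {y ∈ Set.Icc (0:ℝ) 1 | c1 * y + c2 * (1 - y) ≤ V} m' := by
  obtain ⟨y0, hy0⟩ := hC
  rcases lt_or_gt_of_ne hc with hlt | hgt
  · -- c1 < c2 : constraint is y ≥ t
    have hCe : {y ∈ Set.Icc (0:ℝ) 1 | c1 * y + c2 * (1 - y) ≤ V}
        = Set.Icc (max 0 ((V - c2) / (c1 - c2))) 1 := by
      ext y
      simp only [Set.mem_setOf_eq, Set.mem_Icc, max_le_iff]
      constructor
      · rintro ⟨⟨h0, h1⟩, h2⟩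
        refine ⟨⟨h0, ?_⟩, h1⟩
        rw [div_le_iff_of_neg (by linarith)]
        nlinarith
      · rintro ⟨⟨h0, h1⟩, h2⟩
        refine ⟨⟨h0, h2⟩, ?_⟩
        rw [div_le_iff_of_neg (by linarith)] at h1
        nlinarith
    rw [hCe]
    apply key a11 a12 a21 a22 _ _ hβ
    rw [hCe] at hy0
    exact le_trans hy0.1 hy0.2
  · -- c1 > c2 : constraint is y ≤ t
    have hCe : {y ∈ Set.Icc (0:ℝ) 1 | c1 * y + c2 * (1 - y) ≤ V}
        = Set.Icc 0 (min 1 ((V - c2) / (c1 - c2))) := by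
      ext y
      simp only [Set.mem_setOf_eq, Set.mem_Icc, le_min_iff]
      constructor
      · rintro ⟨⟨h0, h1⟩, h2⟩
        refine ⟨h0, h1, ?_⟩
        rw [le_div_iff₀ (by linarith)]
        nlinarith
      · rintro ⟨h0, h1, h2⟩
        refine ⟨⟨h0, h1⟩, ?_⟩
        rw [le_div_iff₀ (by linarith)] at h2
        nlinarith
    rw [hCe]
    apply key a11 a12 a21 a22 _ _ hβ
    rw [hCe] at hy0
    exact le_trans hy0.1 hy0.2
end

section
/- Let A be a real 2×2 matrix with β_1 = a_{11} − a_{21} > 0 and β_2 = a_{22} − a_{12} ≤ 0, and let the constraint set be C = [0, α] with 0 < α < 1. Then m* = α is the unique constrained evolutionarily stable strategy of the constrained single-population game; in particular, when α < 1 the unconstrained dominant pure strategy m = 1 is excluded and the constrained ESS α is not an ESS of the unconstrained game. -/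
lemma uA_sub (a11 a12 a21 a22 x y p : ℝ) :
    uA a11 a12 a21 a22 x p - uA a11 a12 a21 a22 y p
      = (x - y) * (p * (a11 - a21) - (1 - p) * (a22 - a12)) := by
  simp only [uA]; ring

/-- If β1 = a11 − a21 > 0, β2 = a22 − a12 ≤ 0 and C = [0, α] with
0 < α < 1, then α is the unique constrained ESS; the unconstrained dominant pure
strategy 1 is excluded from C, and α is not an ESS of the unconstrained game
(constraint set [0,1]). -/
theorem stmt7 (a11 a12 a21 a22 α : ℝ)
    (hβ1 : a11 - a21 > 0) (hβ2 : a22 - a12 ≤ 0) (hα0 : 0 < α) (hα1 : α < 1) :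
    IsCESS a11 a12 a21 a22 (Set.Icc 0 α) α ∧
    (∀ m, IsCESS a11 a12 a21 a22 (Set.Icc 0 α) m → m = α) ∧
    (1 : ℝ) ∉ Set.Icc (0:ℝ) α ∧
    ¬ IsCESS a11 a12 a21 a22 (Set.Icc 0 1) α := by
  -- key positivity fact for population states p with 0 < p ≤ 1
  have key : ∀ p : ℝ, 0 < p → p ≤ 1 →
      0 < p * (a11 - a21) - (1 - p) * (a22 - a12) := by
    intro p hp hp1
    have h1 : 0 < p * (a11 - a21) := mul_pos hp hβ1
    have h2 : 0 ≤ -((1 - p) * (a22 - a12)) := by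
      rw [neg_nonneg]
      exact mul_nonpos_of_nonneg_of_nonpos (by linarith) hβ2
    linarith
  have keyge : ∀ p : ℝ, 0 ≤ p → p ≤ 1 →
      0 ≤ p * (a11 - a21) - (1 - p) * (a22 - a12) := by
    intro p hp hp1
    have h1 : 0 ≤ p * (a11 - a21) := mul_nonneg hp hβ1.le
    have h2 : (1 - p) * (a22 - a12) ≤ 0 :=
      mul_nonpos_of_nonneg_of_nonpos (by linarith) hβ2
    linarith
  refine ⟨⟨⟨le_of_lt hα0, le_refl α⟩, ?_⟩, ?_, ?_, ?_⟩
  · intro m hm hne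
    refine ⟨1, ⟨one_pos, le_refl 1⟩, ?_⟩
    intro ε hε
    obtain ⟨hε0, hε1⟩ := hε
    set p := ε * m + (1 - ε) * α with hp
    have hmα : m < α := lt_of_le_of_ne hm.2 hne
    have hp0 : 0 < p := by
      have : 0 ≤ ε * m := mul_nonneg hε0.le hm.1
      nlinarith
    have hp1 : p ≤ 1 := by nlinarith [hm.1]
    have := key p hp0 hp1
    have hsub := uA_sub a11 a12 a21 a22 α m p
    nlinarith
  · intro m hm
    by_contra hne
    obtain ⟨hmem, hprop⟩ := hm
    obtain ⟨εb, ⟨hεb0, hεb1⟩, h⟩ := hprop α ⟨hα0.le, le_refl α⟩ (Ne.symm hne)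
    set ε := εb / 2 with hε
    have hεmem : ε ∈ Set.Ioo (0:ℝ) εb := ⟨by positivity, by linarith⟩
    have := h ε hεmem
    set p := ε * α + (1 - ε) * m with hp
    have hε1 : ε < 1 := by linarith [hεmem.2]
    have hp0 : 0 ≤ p := by
      have := hmem.1
      have h1 : 0 ≤ ε * α := mul_nonneg hεmem.1.le hα0.le
      nlinarith
    have hp1 : p ≤ 1 := by nlinarith [hmem.1, hmem.2]
    have hkey := keyge p hp0 hp1
    have hmα : m < α := lt_of_le_of_ne hmem.2 hne
    have hsub := uA_sub a11 a12 a21 a22 m α p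
    nlinarith
  · intro h
    exact absurd h.2 (not_le.mpr hα1)
  · intro hm
    obtain ⟨_, hprop⟩ := hm
    obtain ⟨εb, ⟨hεb0, hεb1⟩, h⟩ := hprop 1 ⟨zero_le_one, le_refl 1⟩ (by linarith)
    set ε := εb / 2 with hε
    have hεmem : ε ∈ Set.Ioo (0:ℝ) εb := ⟨by positivity, by linarith⟩
    have := h ε hεmem
    set p := ε * 1 + (1 - ε) * α with hp
    have hε1 : ε < 1 := by linarith [hεmem.2]
    have hp0 : 0 < p := by nlinarith
    have hp1 : p ≤ 1 := by nlinarith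
    have hkey := key p hp0 hp1
    have hsub := uA_sub a11 a12 a21 a22 α 1 p
    nlinarith
end

section
/- Let A be a real 2×2 matrix with β_1 = a_{11} − a_{21} < 0 and β_2 = a_{22} − a_{12} < 0 (an anticoordination/Hawk–Dove game), and let the constraint set be C = [0, α] with 0 < α < 1. Set x* = β_2/(β_1 + β_2) ∈ (0,1). If x* ≤ α then x* is a constrained evolutionarily stable strategy, and if x* > α then α is a constrained evolutionarily stable strategy. -/
/-- If β1 = a11 − a21 < 0 and β2 = a22 − a12 < 0 (Hawk–Dove) and
C = [0, α] with 0 < α < 1, then x* = β2/(β1 + β2) ∈ (0,1); if x* ≤ α then x* is a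
constrained ESS, and if x* > α then α is a constrained ESS. -/
theorem stmt8 (a11 a12 a21 a22 α : ℝ)
    (hβ1 : a11 - a21 < 0) (hβ2 : a22 - a12 < 0) (hα0 : 0 < α) (hα1 : α < 1) :
    (a22 - a12) / ((a11 - a21) + (a22 - a12)) ∈ Set.Ioo (0:ℝ) 1 ∧
    ((a22 - a12) / ((a11 - a21) + (a22 - a12)) ≤ α →
      IsCESS a11 a12 a21 a22 (Set.Icc 0 α)
        ((a22 - a12) / ((a11 - a21) + (a22 - a12)))) ∧
    ((a22 - a12) / ((a11 - a21) + (a22 - a12)) > α →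
      IsCESS a11 a12 a21 a22 (Set.Icc 0 α) α) := by
  set s := (a11 - a21) + (a22 - a12) with hsdef
  have hs : s < 0 := by linarith
  have hsne : s ≠ 0 := ne_of_lt hs
  set x := (a22 - a12) / s with hxdef
  have hxs : x * s = a22 - a12 := div_mul_cancel₀ _ hsne
  have hx0 : 0 < x := div_pos_iff.mpr (Or.inr ⟨hβ2, hs⟩)
  have hx1 : x < 1 := by nlinarith
  refine ⟨⟨hx0, hx1⟩, ?_, ?_⟩
  · intro hle
    refine ⟨⟨le_of_lt hx0, hle⟩, ?_⟩
    intro m _ hmne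
    refine ⟨1, ⟨one_pos, le_refl 1⟩, ?_⟩
    intro ε ⟨hε0, _⟩
    have hkey := uA_diff a11 a12 a21 a22 x m (ε * m + (1 - ε) * x)
    rw [← hsdef] at hkey
    have hmx : m - x ≠ 0 := sub_ne_zero.mpr hmne
    have hsq : 0 < (m - x) ^ 2 := by positivity
    have h2 : (x - m) * ((ε * m + (1 - ε) * x) * s - (a22 - a12))
        = ε * (-s) * (m - x) ^ 2 := by rw [← hxs]; ring
    have h3 : 0 < ε * (-s) * (m - x) ^ 2 :=
      mul_pos (mul_pos hε0 (neg_pos.mpr hs)) hsq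
    linarith [hkey, h2.symm ▸ h3]
  · intro hgt
    refine ⟨⟨le_of_lt hα0, le_refl α⟩, ?_⟩
    intro m hm hmne
    have hmα : m < α := lt_of_le_of_ne hm.2 hmne
    refine ⟨1, ⟨one_pos, le_refl 1⟩, ?_⟩
    intro ε ⟨hε0, hε1⟩
    have hkey := uA_diff a11 a12 a21 a22 α m (ε * m + (1 - ε) * α)
    rw [← hsdef] at hkey
    -- β2 < α * s since x = β2/s > α and s < 0
    have hβα : a22 - a12 < α * s := by nlinarith [hxs]
    have hT : 0 < (ε * m + (1 - ε) * α) * s - (a22 - a12) := by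
      nlinarith [mul_pos (mul_pos hε0 (sub_pos.mpr hmα)) (neg_pos.mpr hs)]
    have h3 : 0 < (α - m) * ((ε * m + (1 - ε) * α) * s - (a22 - a12)) :=
      mul_pos (sub_pos.mpr hmα) hT
    linarith [hkey]
end

section
/- Let a_{ij} (i,j ∈ {1,2}) be real payoffs of a zero-sum discoordination (matching-pennies-type) game, i.e. b_{ij} = −a_{ij}, a_{11} > a_{21}, a_{22} > a_{12}, a_{11} > a_{12}, and a_{22} > a_{21}. Let the empathy matrix satisfy λ_{11} > 0, λ_{12} < 0, λ_{22} < 0 and λ_{21} > 0. Then the empathetic game G_Λ is a coordination game: a^Λ_{11} > a^Λ_{21}, a^Λ_{22} > a^Λ_{12}, b^Λ_{11} > b^Λ_{12}, and b^Λ_{22} > b^Λ_{21}; in particular both (1,1) and (2,2) are strict pure Nash equilibria of G_Λ. -/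
/-- In a zero-sum discoordination (matching-pennies-type) game
(b_ij = −a_ij, a11 > a21, a22 > a12, a11 > a12, a22 > a21), if the empathy matrix
satisfies λ11 > 0, λ12 < 0, λ22 < 0, λ21 > 0, then the empathetic game G_Λ is a
coordination game: a^Λ_11 > a^Λ_21, a^Λ_22 > a^Λ_12, b^Λ_11 > b^Λ_12 and
b^Λ_22 > b^Λ_21; in particular both (1,1) and (2,2) are strict pure Nash
equilibria of G_Λ. -/
theorem stmt10 (a11 a12 a21 a22 b11 b12 b21 b22 l11 l12 l21 l22 : ℝ)
    (hb11 : b11 = -a11) (hb12 : b12 = -a12) (hb21 : b21 = -a21) (hb22 : b22 = -a22)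
    (h1 : a11 > a21) (h2 : a22 > a12) (h3 : a11 > a12) (h4 : a22 > a21)
    (hl11 : l11 > 0) (hl12 : l12 < 0) (hl22 : l22 < 0) (hl21 : l21 > 0) :
    (l11 * a11 + l12 * b11 > l11 * a21 + l12 * b21) ∧
    (l11 * a22 + l12 * b22 > l11 * a12 + l12 * b12) ∧
    (l22 * b11 + l21 * a11 > l22 * b12 + l21 * a12) ∧
    (l22 * b22 + l21 * a22 > l22 * b21 + l21 * a21) := by
  subst hb11 hb12 hb21 hb22
  refine ⟨?_, ?_, ?_, ?_⟩ <;> nlinarith [mul_pos hl11 (sub_pos.mpr h1), mul_pos hl11 (sub_pos.mpr h2), mul_pos hl21 (sub_pos.mpr h3), mul_pos hl21 (sub_pos.mpr h4), mul_pos (neg_pos.mpr hl12) (sub_pos.mpr h1), mul_pos (neg_pos.mpr hl12) (sub_pos.mpr h2), mul_pos (neg_pos.mpr hl22) (sub_pos.mpr h3), mul_pos (neg_pos.mpr hl22) (sub_pos.mpr h4)]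
end

section
/- Let a_{21} > a_{11} > a_{22} > a_{12} be real numbers, set b_{ij} = a_{ji} (a prisoner's dilemma), and let λ_{11} = λ_{22} = 1. If min(λ_{12}, λ_{21}) > max( (a_{21} − a_{11})/(a_{11} − a_{12}), (a_{22} − a_{12})/(a_{21} − a_{22}) ), then (1,1) is the unique pure Nash equilibrium of the empathetic game G_Λ, and (1,1) is exactly the unique Berge solution of the original game G_I; i.e., positive partial mutual altruism leads to the Berge solution in the prisoner's dilemma. -/
/-- `(i', j')` is a pure Nash equilibrium of the 2×2 bimatrix game `(a, b)`.
Action "1" of the paper is index `0`, action "2" is index `1`. -/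
def IsPureNash (a b : Fin 2 → Fin 2 → ℝ) (i' j' : Fin 2) : Prop :=
  (∀ i : Fin 2, a i' j' ≥ a i j') ∧ (∀ j : Fin 2, b i' j' ≥ b i' j)

/-- `(i', j')` is a Berge solution of the 2×2 bimatrix game `(a, b)`. -/
def IsBerge (a b : Fin 2 → Fin 2 → ℝ) (i' j' : Fin 2) : Prop :=
  (∀ j : Fin 2, a i' j' ≥ a i' j) ∧ (∀ i : Fin 2, b i' j' ≥ b i j')

/-- In a prisoner's dilemma (a21 > a11 > a22 > a12, b_ij = a_ji) with
λ11 = λ22 = 1 and min(λ12, λ21) > max((a21 − a11)/(a11 − a12), (a22 − a12)/(a21 − a22)),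
the profile (1,1) — indices (0,0) — is the unique pure Nash equilibrium of the
empathetic game G_Λ, and it is exactly the unique Berge solution of G_I: positive
partial mutual altruism leads to the Berge solution. -/
theorem stmt12 (a b : Fin 2 → Fin 2 → ℝ) (l12 l21 : ℝ)
    (hpd1 : a 1 0 > a 0 0) (hpd2 : a 0 0 > a 1 1) (hpd3 : a 1 1 > a 0 1)
    (hb : ∀ i j, b i j = a j i)
    (hl : min l12 l21 >
      max ((a 1 0 - a 0 0) / (a 0 0 - a 0 1)) ((a 1 1 - a 0 1) / (a 1 0 - a 1 1))) :
    (IsPureNash (fun i j => a i j + l12 * b i j) (fun i j => b i j + l21 * a i j) 0 0 ∧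
      ∀ i' j' : Fin 2,
        IsPureNash (fun i j => a i j + l12 * b i j) (fun i j => b i j + l21 * a i j) i' j' →
          i' = 0 ∧ j' = 0) ∧
    (IsBerge a b 0 0 ∧ ∀ i' j' : Fin 2, IsBerge a b i' j' → i' = 0 ∧ j' = 0) := by
  have hd1 : (0:ℝ) < a 0 0 - a 0 1 := by linarith
  have hd2 : (0:ℝ) < a 1 0 - a 1 1 := by linarith
  have h12a : (a 1 0 - a 0 0) / (a 0 0 - a 0 1) < l12 :=
    lt_of_le_of_lt (le_max_left _ _) (lt_of_lt_of_le hl (min_le_left _ _))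
  have h12b : (a 1 1 - a 0 1) / (a 1 0 - a 1 1) < l12 :=
    lt_of_le_of_lt (le_max_right _ _) (lt_of_lt_of_le hl (min_le_left _ _))
  have h21a : (a 1 0 - a 0 0) / (a 0 0 - a 0 1) < l21 :=
    lt_of_le_of_lt (le_max_left _ _) (lt_of_lt_of_le hl (min_le_right _ _))
  have h21b : (a 1 1 - a 0 1) / (a 1 0 - a 1 1) < l21 :=
    lt_of_le_of_lt (le_max_right _ _) (lt_of_lt_of_le hl (min_le_right _ _))
  rw [div_lt_iff₀ hd1] at h12a h21a
  rw [div_lt_iff₀ hd2] at h12b h21b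
  have b00 := hb 0 0; have b01 := hb 0 1; have b10 := hb 1 0; have b11 := hb 1 1
  refine ⟨⟨⟨?_, ?_⟩, ?_⟩, ⟨⟨?_, ?_⟩, ?_⟩⟩
  · intro i; fin_cases i <;> simp_all <;> linarith
  · intro j; fin_cases j <;> simp_all <;> linarith
  · intro i' j' h
    obtain ⟨h1, h2⟩ := h
    fin_cases i' <;> fin_cases j' <;> simp_all
    · linarith
    · linarith
    · linarith
  · intro j; fin_cases j <;> simp_all <;> linarith
  · intro i; fin_cases i <;> simp_all <;> linarith
  · intro i' j' h
    obtain ⟨h1, h2⟩ := h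
    fin_cases i' <;> fin_cases j' <;> simp_all
    · linarith
    · linarith
    · linarith
end
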